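/- Let f: ℝⁿ → ℝ be a polynomial that is bounded from below. Then inf f belongs to K(f) = K_0(f) ∪ K_∞(f), the set of generalized critical values of f. -/

import Mathlib

open Filter MvPolynomial

lemma hasDerivAt_eval_update {n : ℕ} (f : MvPolynomial (Fin n) ℝ) (c : Fin n → ℝ) (j : Fin n) (t : ℝ) :
    HasDerivAt (fun s => eval (Function.update c j s) f)
      (eval (Function.update c j t) (pderiv j f)) t := by
  induction f using MvPolynomial.induction_on with
  | C a => simpa using hasDerivAt_const t a
  | add p q hp hq => simpa using hp.fun_add hq
  | mul_X p i hp =>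
    by_cases h : i = j
    · subst h
      have h1 : (fun s => eval (Function.update c i s) (p * X i))
          = fun s => eval (Function.update c i s) p * s := by
        funext s; simp
      rw [h1]
      have := (hp).fun_mul (hasDerivAt_id t)
      simpa [pderiv_mul, pderiv_X, mul_comm, mul_add, add_comm] using this
    · have h1 : (fun s => eval (Function.update c j s) (p * X i))
          = fun s => eval (Function.update c j s) p * c i := by
        funext s; simp [Function.update_of_ne h]
      rw [h1]
      have := hp.mul_const (c i)
      simpa [pderiv_mul, pderiv_X, Pi.single_eq_of_ne h, Function.update_of_ne h, mul_comm] using this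

lemma hasDerivAt_sumsq_update {n : ℕ} (y : Fin n → ℝ) (j : Fin n) :
    HasDerivAt (fun s => 1 + ∑ i, Function.update y j s i ^ 2) (2 * y j) (y j) := by
  have h : ∀ i : Fin n, HasDerivAt (fun s => Function.update y j s i ^ 2)
      (if i = j then 2 * y j else 0) (y j) := by
    intro i
    by_cases h : i = j
    · subst h
      simp only [Function.update_self, if_pos rfl]
      simpa using hasDerivAt_pow 2 (y i)
    · simp only [Function.update_of_ne h, if_neg h]
      exact hasDerivAt_const _ _
  have hs := HasDerivAt.fun_sum (u := Finset.univ) (fun i _ => h i)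
  have : (∑ i, if i = j then 2 * y j else 0) = 2 * y j := by simp
  rw [this] at hs
  simpa using (hasDerivAt_const (y j) (1:ℝ)).fun_add hs

lemma pderiv_at_min {n : ℕ} (f : MvPolynomial (Fin n) ℝ) {ε : ℝ} (hε : 0 < ε)
    (y : Fin n → ℝ)
    (hy : ∀ x, eval y f + ε * Real.log (1 + ∑ i, y i ^ 2)
      ≤ eval x f + ε * Real.log (1 + ∑ i, x i ^ 2)) (j : Fin n) :
    eval y (pderiv j f) = -(ε * (2 * y j) / (1 + ∑ i, y i ^ 2)) := by
  set S : ℝ := ∑ i, y i ^ 2 with hS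
  have hSpos : (0:ℝ) < 1 + S := by positivity
  have hq := hasDerivAt_sumsq_update y j
  have hlog : HasDerivAt (fun s => Real.log (1 + ∑ i, Function.update y j s i ^ 2))
      ((2 * y j) / (1 + S)) (y j) := by
    have := hq.log (by simpa [Function.update_eq_self] using hSpos.ne')
    simpa [Function.update_eq_self] using this
  have hF : HasDerivAt (fun s => eval (Function.update y j s) f
        + ε * Real.log (1 + ∑ i, Function.update y j s i ^ 2))
      (eval y (pderiv j f) + ε * ((2 * y j) / (1 + S))) (y j) := by
    have h1 := hasDerivAt_eval_update f y j (y j)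
    rw [Function.update_eq_self] at h1
    exact h1.add (hlog.const_mul ε)
  have hmin : IsLocalMin (fun s => eval (Function.update y j s) f
      + ε * Real.log (1 + ∑ i, Function.update y j s i ^ 2)) (y j) := by
    apply Filter.Eventually.of_forall
    intro s
    simpa [Function.update_eq_self] using hy (Function.update y j s)
  have h0 := hmin.hasDerivAt_eq_zero hF
  have : eval y (pderiv j f) = - (ε * ((2 * y j) / (1 + S))) := by linarith
  rw [this]; ring
lemma norm_sq_le_sum_sq {n : ℕ} (x : Fin n → ℝ) : ‖x‖ ^ 2 ≤ ∑ i, x i ^ 2 := by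
  have h1 : ‖x‖ ≤ Real.sqrt (∑ i, x i ^ 2) := by
    rw [pi_norm_le_iff_of_nonneg (Real.sqrt_nonneg _)]
    intro i
    rw [Real.norm_eq_abs, ← Real.sqrt_sq_eq_abs]
    exact Real.sqrt_le_sqrt (Finset.single_le_sum (fun i _ => sq_nonneg (x i)) (Finset.mem_univ i))
  calc ‖x‖ ^ 2 ≤ Real.sqrt (∑ i, x i ^ 2) ^ 2 := by
        exact pow_le_pow_left₀ (norm_nonneg x) h1 2
    _ = ∑ i, x i ^ 2 := Real.sq_sqrt (by positivity)

lemma exists_min_penalized {n : ℕ} (f : MvPolynomial (Fin n) ℝ) (m : ℝ)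
    (hm : ∀ x : Fin n → ℝ, m ≤ eval x f) {ε : ℝ} (hε : 0 < ε) :
    ∃ y : Fin n → ℝ, ∀ x, eval y f + ε * Real.log (1 + ∑ i, y i ^ 2)
      ≤ eval x f + ε * Real.log (1 + ∑ i, x i ^ 2) := by
  have hpos : ∀ x : Fin n → ℝ, (0:ℝ) < 1 + ∑ i, x i ^ 2 := fun x => by positivity
  have hcont : Continuous fun x : Fin n → ℝ =>
      eval x f + ε * Real.log (1 + ∑ i, x i ^ 2) := by
    refine f.continuous_eval.add (continuous_const.mul (Continuous.log ?_ fun x => (hpos x).ne'))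
    exact continuous_const.add (continuous_finset_sum _ fun i _ => (continuous_apply i).pow 2)
  have h1 : Tendsto (fun r : ℝ => m + ε * Real.log (1 + r ^ 2)) atTop atTop := by
    apply tendsto_atTop_add_const_left
    apply Tendsto.const_mul_atTop hε
    exact Real.tendsto_log_atTop.comp
      (tendsto_atTop_add_const_left _ 1 (tendsto_pow_atTop two_ne_zero))
  have h2 : Tendsto (fun x : Fin n → ℝ => m + ε * Real.log (1 + ‖x‖ ^ 2))
      (cocompact _) atTop := h1.comp tendsto_norm_cocompact_atTop
  refine hcont.exists_forall_le (tendsto_atTop_mono (fun x => ?_) h2)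
  have hlog : Real.log (1 + ‖x‖ ^ 2) ≤ Real.log (1 + ∑ i, x i ^ 2) := by
    apply Real.log_le_log (by positivity)
    linarith [norm_sq_le_sum_sq x]
  have := mul_le_mul_of_nonneg_left hlog hε.le
  linarith [hm x]
lemma grad_bound {n : ℕ} (f : MvPolynomial (Fin n) ℝ) {ε : ℝ} (hε : 0 < ε)
    (y : Fin n → ℝ)
    (hy : ∀ x, eval y f + ε * Real.log (1 + ∑ i, y i ^ 2)
      ≤ eval x f + ε * Real.log (1 + ∑ i, x i ^ 2)) :
    ‖y‖ * ‖(fun j : Fin n => eval y (pderiv j f))‖ ≤ 2 * ε := by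
  set S : ℝ := ∑ i, y i ^ 2 with hS
  have hSpos : (0:ℝ) < 1 + S := by positivity
  have hv : (fun j : Fin n => eval y (pderiv j f)) = (-(2 * ε / (1 + S))) • y := by
    funext j
    rw [pderiv_at_min f hε y hy j]
    simp only [Pi.smul_apply, smul_eq_mul]
    field_simp
    rfl
  rw [hv, norm_smul, Real.norm_eq_abs, abs_neg, abs_of_nonneg (by positivity)]
  have hy2 : ‖y‖ ^ 2 ≤ S := norm_sq_le_sum_sq y
  rw [show ‖y‖ * (2 * ε / (1 + S) * ‖y‖) = 2 * ε * (‖y‖ ^ 2 / (1 + S)) by ring]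
  have h1 : ‖y‖ ^ 2 / (1 + S) ≤ 1 := by
    rw [div_le_one hSpos]; linarith
  nlinarith [sq_nonneg ‖y‖]
lemma pderiv_eq_zero_of_global_min {n : ℕ} (f : MvPolynomial (Fin n) ℝ)
    (x : Fin n → ℝ) (hx : ∀ z, eval x f ≤ eval z f) (j : Fin n) :
    eval x (pderiv j f) = 0 := by
  have h1 := hasDerivAt_eval_update f x j (x j)
  rw [Function.update_eq_self] at h1
  refine IsLocalMin.hasDerivAt_eq_zero ?_ h1
  apply Filter.Eventually.of_forall
  intro s
  simpa [Function.update_eq_self] using hx (Function.update x j s)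

theorem inf_mem_generalized_critical_values {n : ℕ} (f : MvPolynomial (Fin n) ℝ)
    (hbdd : BddBelow (Set.range fun x : Fin n → ℝ => MvPolynomial.eval x f)) :
    (∃ x : Fin n → ℝ, (∀ j, MvPolynomial.eval x (pderiv j f) = 0) ∧
        MvPolynomial.eval x f = sInf (Set.range fun x : Fin n → ℝ => MvPolynomial.eval x f)) ∨
    (∃ u : ℕ → Fin n → ℝ,
      Tendsto (fun ν => ‖u ν‖) atTop atTop ∧
      Tendsto (fun ν => MvPolynomial.eval (u ν) f) atTop
        (nhds (sInf (Set.range fun x : Fin n → ℝ => MvPolynomial.eval x f))) ∧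
      Tendsto (fun ν => ‖u ν‖ * ‖(fun j : Fin n => MvPolynomial.eval (u ν) (pderiv j f))‖)
        atTop (nhds 0)) := by
  set m := sInf (Set.range fun x : Fin n → ℝ => MvPolynomial.eval x f) with hm_def
  have hm : ∀ x : Fin n → ℝ, m ≤ eval x f := fun x => csInf_le hbdd ⟨x, rfl⟩
  by_cases hatt : ∃ x : Fin n → ℝ, eval x f = m
  · obtain ⟨x, hx⟩ := hatt
    exact Or.inl ⟨x, fun j => pderiv_eq_zero_of_global_min f x
      (fun z => hx ▸ hm z) j, hx⟩
  · right
    set δ : ℕ → ℝ := fun ν => ((ν : ℝ) + 1)⁻¹ with hδ_def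
    have hδpos : ∀ ν, 0 < δ ν := fun ν => by positivity
    have hδ0 : Tendsto δ atTop (nhds 0) := tendsto_one_div_add_atTop_nhds_zero_nat.congr
      (fun ν => by simp [hδ_def, one_div])
    have hxs : ∀ ν : ℕ, ∃ x : Fin n → ℝ, eval x f < m + δ ν := by
      intro ν
      have : m < m + δ ν := by linarith [hδpos ν]
      obtain ⟨a, ⟨x, rfl⟩, hax⟩ := exists_lt_of_csInf_lt (Set.range_nonempty _) this
      exact ⟨x, hax⟩
    choose xs hxsf using hxs
    set L : ℕ → ℝ := fun ν => Real.log (1 + ∑ i, xs ν i ^ 2) with hL_def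
    have hLnn : ∀ ν, 0 ≤ L ν := fun ν => Real.log_nonneg (by nlinarith [Finset.sum_nonneg (fun i (_ : i ∈ Finset.univ) => sq_nonneg (xs ν i))])
    set ε : ℕ → ℝ := fun ν => δ ν / (1 + L ν) with hε_def
    have hεpos : ∀ ν, 0 < ε ν := fun ν => div_pos (hδpos ν) (by linarith [hLnn ν])
    have hεδ : ∀ ν, ε ν ≤ δ ν := fun ν =>
      div_le_self (hδpos ν).le (by linarith [hLnn ν])
    choose y hy using fun ν => exists_min_penalized f m hm (hεpos ν)
    -- upper bound on f(y ν)
    have hfy_ub : ∀ ν, eval (y ν) f ≤ m + 2 * δ ν := by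
      intro ν
      have hlogy : 0 ≤ Real.log (1 + ∑ i, y ν i ^ 2) := Real.log_nonneg (by nlinarith [Finset.sum_nonneg (fun i (_ : i ∈ Finset.univ) => sq_nonneg (y ν i))])
      have h1 : eval (y ν) f ≤ eval (y ν) f
          + ε ν * Real.log (1 + ∑ i, y ν i ^ 2) := by nlinarith [hεpos ν]
      have h2 := hy ν (xs ν)
      have h3 : ε ν * L ν ≤ δ ν := by
        rw [hε_def]
        rw [div_mul_eq_mul_div, div_le_iff₀ (by linarith [hLnn ν] : (0:ℝ) < 1 + L ν)]
        nlinarith [hδpos ν, hLnn ν]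
      have h4 := hxsf ν
      calc eval (y ν) f ≤ eval (xs ν) f + ε ν * L ν := by
            rw [hL_def]; linarith
        _ ≤ m + 2 * δ ν := by linarith
    -- f(y ν) → m
    have hfy : Tendsto (fun ν => eval (y ν) f) atTop (nhds m) := by
      have hub : Tendsto (fun ν => m + 2 * δ ν) atTop (nhds m) := by
        have := (hδ0.const_mul 2).const_add m
        simpa using this
      exact tendsto_of_tendsto_of_tendsto_of_le_of_le tendsto_const_nhds hub
        (fun ν => hm (y ν)) hfy_ub
    -- gradient bound → 0
    have hgrad : Tendsto (fun ν => ‖y ν‖ * ‖(fun j : Fin n => eval (y ν) (pderiv j f))‖)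
        atTop (nhds 0) := by
      have hub : Tendsto (fun ν => 2 * δ ν) atTop (nhds 0) := by
        simpa using hδ0.const_mul 2
      refine tendsto_of_tendsto_of_tendsto_of_le_of_le tendsto_const_nhds hub
        (fun ν => by positivity) (fun ν => ?_)
      calc ‖y ν‖ * ‖(fun j : Fin n => eval (y ν) (pderiv j f))‖
          ≤ 2 * ε ν := grad_bound f (hεpos ν) (y ν) (hy ν)
        _ ≤ 2 * δ ν := by linarith [hεδ ν]
    -- ‖y ν‖ → ∞
    have hnorm : Tendsto (fun ν => ‖y ν‖) atTop atTop := by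
      by_contra hcon
      rw [tendsto_atTop] at hcon
      push_neg at hcon
      obtain ⟨R, hR⟩ := hcon
      obtain ⟨φ, hφmono, hφ⟩ := Filter.extraction_of_frequently_atTop hR
      have hball : ∀ k, y (φ k) ∈ Metric.closedBall (0 : Fin n → ℝ) R := by
        intro k
        rw [Metric.mem_closedBall, dist_zero_right]
        exact le_of_lt (hφ k)
      obtain ⟨z, _, ψ, hψmono, hψ⟩ :=
        (isCompact_closedBall (0 : Fin n → ℝ) R).tendsto_subseq hball
      have h1 : Tendsto (fun k => eval (y (φ (ψ k))) f) atTop (nhds (eval z f)) :=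
        (f.continuous_eval.tendsto z).comp hψ
      have h2 : Tendsto (fun k => eval (y (φ (ψ k))) f) atTop (nhds m) :=
        hfy.comp ((hφmono.comp hψmono).tendsto_atTop)
      exact hatt ⟨z, tendsto_nhds_unique h1 h2⟩
    exact ⟨y, hnorm, hfy, hgrad⟩
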